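/- Let A, B, R be intervals in ℝ (one-dimensional rectangular uncertainty regions) with R = [R_min, R_max]. Then for all a ∈ A, b ∈ B, r ∈ R it holds that |a - r| < |b - r|, if and only if max over r ∈ {R_min, R_max} of (MaxDist(A, r) - MinDist(B, r)) < 0, where MaxDist(A,r) = max_{a∈A} |a-r| and MinDist(B,r) = min_{b∈B} |b-r|. -/
import Mathlib


/-- Maximum distance between a point `r` and a set `I ⊆ ℝ`. -/
noncomputable def MaxDist (I : Set ℝ) (r : ℝ) : ℝ := sSup ((fun x => |x - r|) '' I)

/-- Minimum distance between a point `r` and a set `I ⊆ ℝ`. -/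
noncomputable def MinDist (I : Set ℝ) (r : ℝ) : ℝ := sInf ((fun x => |x - r|) '' I)

lemma maxdist_spec (c d r : ℝ) (h : c ≤ d) :
    (∃ x ∈ Set.Icc c d, MaxDist (Set.Icc c d) r = |x - r|) ∧
    ∀ y ∈ Set.Icc c d, |y - r| ≤ MaxDist (Set.Icc c d) r := by
  have hc : IsCompact ((fun x => |x - r|) '' Set.Icc c d) :=
    isCompact_Icc.image (by continuity)
  have hne : ((fun x => |x - r|) '' Set.Icc c d).Nonempty :=
    (Set.nonempty_Icc.2 h).image _
  constructor
  · obtain ⟨x, hx, hx'⟩ := hc.sSup_mem hne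
    exact ⟨x, hx, hx'.symm⟩
  · intro y hy
    exact le_csSup hc.bddAbove ⟨y, hy, rfl⟩

lemma mindist_spec (c d r : ℝ) (h : c ≤ d) :
    (∃ x ∈ Set.Icc c d, MinDist (Set.Icc c d) r = |x - r|) ∧
    ∀ y ∈ Set.Icc c d, MinDist (Set.Icc c d) r ≤ |y - r| := by
  have hc : IsCompact ((fun x => |x - r|) '' Set.Icc c d) :=
    isCompact_Icc.image (by continuity)
  have hne : ((fun x => |x - r|) '' Set.Icc c d).Nonempty :=
    (Set.nonempty_Icc.2 h).image _
  constructor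
  · obtain ⟨x, hx, hx'⟩ := hc.sInf_mem hne
    exact ⟨x, hx, hx'.symm⟩
  · intro y hy
    exact csInf_le hc.bddBelow ⟨y, hy, rfl⟩

lemma cross (a b r s : ℝ) (hab : a ≤ b) (hrs : r ≤ s) :
    |a - r| + |b - s| ≤ |a - s| + |b - r| := by
  rcases abs_cases (a - r) with ⟨h1, h1'⟩ | ⟨h1, h1'⟩ <;>
  rcases abs_cases (b - s) with ⟨h2, h2'⟩ | ⟨h2, h2'⟩ <;>
  rcases abs_cases (a - s) with ⟨h3, h3'⟩ | ⟨h3, h3'⟩ <;>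
  rcases abs_cases (b - r) with ⟨h4, h4'⟩ | ⟨h4, h4'⟩ <;>
  linarith

theorem stmt2 (a₁ a₂ b₁ b₂ rmin rmax : ℝ)
    (ha : a₁ ≤ a₂) (hb : b₁ ≤ b₂) (hr : rmin ≤ rmax) :
    (∀ a ∈ Set.Icc a₁ a₂, ∀ b ∈ Set.Icc b₁ b₂, ∀ r ∈ Set.Icc rmin rmax,
        |a - r| < |b - r|) ↔
      max (MaxDist (Set.Icc a₁ a₂) rmin - MinDist (Set.Icc b₁ b₂) rmin)
          (MaxDist (Set.Icc a₁ a₂) rmax - MinDist (Set.Icc b₁ b₂) rmax) < 0 := by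
  constructor
  · intro H
    rw [max_lt_iff]
    constructor
    · obtain ⟨⟨x, hx, hxe⟩, -⟩ := maxdist_spec a₁ a₂ rmin ha
      obtain ⟨⟨y, hy, hye⟩, -⟩ := mindist_spec b₁ b₂ rmin hb
      have := H x hx y hy rmin ⟨le_refl _, hr⟩
      rw [hxe, hye]; linarith
    · obtain ⟨⟨x, hx, hxe⟩, -⟩ := maxdist_spec a₁ a₂ rmax ha
      obtain ⟨⟨y, hy, hye⟩, -⟩ := mindist_spec b₁ b₂ rmax hb
      have := H x hx y hy rmax ⟨hr, le_refl _⟩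
      rw [hxe, hye]; linarith
  · intro H a haA b hbB r hrR
    have hmin : MaxDist (Set.Icc a₁ a₂) rmin - MinDist (Set.Icc b₁ b₂) rmin < 0 :=
      lt_of_le_of_lt (le_max_left _ _) H
    have hmax : MaxDist (Set.Icc a₁ a₂) rmax - MinDist (Set.Icc b₁ b₂) rmax < 0 :=
      lt_of_le_of_lt (le_max_right _ _) H
    have e1 : |a - rmin| ≤ MaxDist (Set.Icc a₁ a₂) rmin := (maxdist_spec a₁ a₂ rmin ha).2 a haA
    have e2 : MinDist (Set.Icc b₁ b₂) rmin ≤ |b - rmin| := (mindist_spec b₁ b₂ rmin hb).2 b hbB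
    have e3 : |a - rmax| ≤ MaxDist (Set.Icc a₁ a₂) rmax := (maxdist_spec a₁ a₂ rmax ha).2 a haA
    have e4 : MinDist (Set.Icc b₁ b₂) rmax ≤ |b - rmax| := (mindist_spec b₁ b₂ rmax hb).2 b hbB
    rcases le_total a b with hab | hab
    · have := cross a b r rmax hab hrR.2
      linarith
    · have := cross b a rmin r hab hrR.1
      linarith
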